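/- Let 𝒳 be a nonempty finite set, p a probability distribution on 𝒳 with p(x) > 0 for all x, K a Markov kernel on 𝒳 with K(x,y) > 0 for all x, y that is reversible with respect to p, α > 0, and r : 𝒳 → ℝ. Let p*(x) = p(x)·exp(r(x)/α)/Z with Z = Σ_{x'} p(x')·exp(r(x')/α), let λ(x,y) = 1/(p(x)·K(x,y)·exp((r(x)+r(y))/α)), and w(x,y) = p*(y)·K(y,x)·λ(y,x). Then for every N ≥ 1, every pair of states x, y ∈ 𝒳, and arbitrary candidate families y_1,…,y_N ∈ 𝒳 and reference families x_1,…,x_N ∈ 𝒳, the Multiple-Try Metropolis acceptance ratio satisfies (Σ_{j=1}^{N} w(x, y_j)) / (Σ_{j=1}^{N} w(y, x_j)) = exp((r(y) − r(x))/α); hence the acceptance probability min{1, Σ_j w(x,y_j)/Σ_j w(y,x_j)} equals min{1, exp((r(y) − r(x))/α)} and is independent of the candidate and reference samples. -/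

import Mathlib

/-- With target `p*(x) = p x · exp(r x / α) / Z`, balancing function
`λ(x,y) = 1/(p x · K x y · exp((r x + r y)/α))`, and MTM weight
`w(x,y) = p*(y)·K(y,x)·λ(y,x)`, for every `N ≥ 1`, states `x, y` and arbitrary
candidate family `y₁,…,y_N` and reference family `x₁,…,x_N`, the MTM acceptance ratio
satisfies `(Σⱼ w(x,yⱼ))/(Σⱼ w(y,xⱼ)) = exp((r y − r x)/α)`; hence the acceptance
probability `min{1, ·}` equals `min{1, exp((r y − r x)/α)}`, independently of the
candidate and reference samples. -/
theorem mtm_acceptance_ratio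
    {X : Type*} [Fintype X] [Nonempty X]
    (p : X → ℝ) (hp_pos : ∀ x, 0 < p x) (hp_sum : ∑ x, p x = 1)
    (K : X → X → ℝ) (hK_pos : ∀ x y, 0 < K x y) (hK_sum : ∀ x, ∑ y, K x y = 1)
    (hrev : ∀ x y, p x * K x y = p y * K y x)
    (α : ℝ) (hα : 0 < α) (r : X → ℝ)
    (pstar : X → ℝ)
    (hpstar : ∀ x, pstar x =
      p x * Real.exp (r x / α) / ∑ x', p x' * Real.exp (r x' / α))
    (lam : X → X → ℝ)
    (hlam : ∀ x y, lam x y = 1 / (p x * K x y * Real.exp ((r x + r y) / α)))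
    (w : X → X → ℝ) (hw : ∀ x y, w x y = pstar y * K y x * lam y x) :
    ∀ N : ℕ, 1 ≤ N → ∀ x y : X, ∀ ys xs : Fin N → X,
      (∑ j, w x (ys j)) / (∑ j, w y (xs j)) = Real.exp ((r y - r x) / α)
      ∧ min 1 ((∑ j, w x (ys j)) / (∑ j, w y (xs j)))
          = min 1 (Real.exp ((r y - r x) / α)) := by
  set Z : ℝ := ∑ x', p x' * Real.exp (r x' / α) with hZdef
  have hZ : 0 < Z := Finset.sum_pos (fun i _ => mul_pos (hp_pos i) (Real.exp_pos _)) Finset.univ_nonempty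
  have hw' : ∀ x y, w x y = Real.exp (-(r x / α)) / Z := by
    intro x y
    rw [hw, hpstar, hlam]
    have h1 : (r y + r x) / α = r y / α + r x / α := by ring
    rw [h1, Real.exp_add, Real.exp_neg]
    have e1 := Real.exp_pos (r x / α)
    have e2 := Real.exp_pos (r y / α)
    have := hp_pos y; have := hK_pos y x
    field_simp
  intro N hN x y ys xs
  have hsum : ∀ z : X, ∀ f : Fin N → X,
      (∑ j, w z (f j)) = N * (Real.exp (-(r z / α)) / Z) := by
    intro z f
    simp [hw']
  have hratio : (∑ j, w x (ys j)) / (∑ j, w y (xs j))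
      = Real.exp ((r y - r x) / α) := by
    rw [hsum x ys, hsum y xs]
    have hN0 : (N : ℝ) ≠ 0 := Nat.cast_ne_zero.mpr (by omega)
    rw [mul_div_mul_left _ _ hN0, div_div_div_comm, div_self hZ.ne', div_one,
      ← Real.exp_sub]
    ring_nf
  exact ⟨hratio, by rw [hratio]⟩
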